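/- Pufferfish privacy does not compose linearly in general: there exists a two-node Markov chain over states $\{0,1\}$ with transition probabilities $P(X_2 = 1 \mid X_1 = 1) = 0.9$ and $P(X_2 = 1 \mid X_1 = 0) = 0.01$, such that for the mechanism $M(X) = X_1 + X_2 + \mathrm{Lap}(1)$ and the secret pair $(X_1 = 0, X_1 = 1)$: if $\epsilon = \sup_w |\log S(w)|$ where $S(w) = \frac{p(M(X) = w \mid X_1 = 1)}{p(M(X) = w \mid X_1 = 0)}$, then releasing two independent copies $(M(X), M(X'))$ where $M$ is applied twice with independent noise to the same $X$, i.e., $(F(X) + Z_1, F(X) + Z_2)$, fails to satisfy $2\epsilon$-Pufferfish privacy: $\sup_{w} \left|\log \frac{p(F(X)+Z_1 = w, F(X)+Z_2 = w \mid X_1 = 1)}{p(F(X)+Z_1 = w, F(X)+Z_2 = w \mid X_1 = 0)}\right| > 2\epsilon$. Concretely, with $p = 0.9$, $q = 0.01$: $(\max_w \max\{S(w), 1/S(w)\})^2 = e^2 \cdot 6.2672\ldots$ while the two-release worst-case ratio is at least $e^2 \cdot 6.3448\ldots$. -/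
import Mathlib


/-- Density of the standard Laplace distribution `Lap(1)`. -/
noncomputable def lap1 (z : ℝ) : ℝ := (1 / 2) * Real.exp (-|z|)

/-- Density of `F(X) + Z` at `w` given `X₁ = 1`, for the two-node binary chain with
`P(X₂=1|X₁=1) = 0.9`, query `F(X) = X₁ + X₂` and `Z ∼ Lap(1)`. -/
noncomputable def dens1 (w : ℝ) : ℝ := lap1 (w - 2) * 0.9 + lap1 (w - 1) * (1 - 0.9)

/-- Density of `F(X) + Z` at `w` given `X₁ = 0`, with `P(X₂=1|X₁=0) = 0.01`. -/
noncomputable def dens0 (w : ℝ) : ℝ := lap1 (w - 1) * 0.01 + lap1 w * (1 - 0.01)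

/-- Joint density of `(F(X)+Z₁, F(X)+Z₂)` at `(w, w)` given `X₁ = 1`
(independent noises `Z₁, Z₂ ∼ Lap(1)`). -/
noncomputable def dens1Two (w : ℝ) : ℝ :=
  (lap1 (w - 2))^2 * 0.9 + (lap1 (w - 1))^2 * (1 - 0.9)

/-- Joint density of `(F(X)+Z₁, F(X)+Z₂)` at `(w, w)` given `X₁ = 0`. -/
noncomputable def dens0Two (w : ℝ) : ℝ :=
  (lap1 (w - 1))^2 * 0.01 + (lap1 w)^2 * (1 - 0.01)

lemma lap1_pos (z : ℝ) : 0 < lap1 z := by unfold lap1; positivity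

lemma lap1_le (a b : ℝ) (h : |a - b| ≤ 1) : lap1 a ≤ Real.exp 1 * lap1 b := by
  unfold lap1
  rw [mul_comm (Real.exp 1), mul_assoc, ← Real.exp_add]
  have : -|a| ≤ -|b| + 1 := by
    have h1 : |a| - |b| ≥ -(|a - b|) := by
      have := abs_sub_abs_le_abs_sub b a
      rw [abs_sub_comm] at this; linarith
    linarith
  have := Real.exp_le_exp.mpr this
  linarith

noncomputable def Econ : ℝ := Real.exp 1 * (0.9 * Real.exp 1 + 0.1) / (0.01 * Real.exp 1 + 0.99)

lemma S_bound (w : ℝ) : |Real.log (dens1 w / dens0 w)| ≤ Real.log Econ := by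
  set e := Real.exp 1 with he
  have he1 : (1:ℝ) < e := by rw [he]; have := Real.exp_one_gt_d9; linarith
  have ha := lap1_pos (w - 2)
  have hb := lap1_pos (w - 1)
  have hc := lap1_pos w
  have hab : lap1 (w - 2) ≤ e * lap1 (w - 1) := lap1_le _ _ (by norm_num)
  have hba : lap1 (w - 1) ≤ e * lap1 (w - 2) := lap1_le _ _ (by norm_num)
  have hbc : lap1 (w - 1) ≤ e * lap1 w := lap1_le _ _ (by norm_num)
  have hcb : lap1 w ≤ e * lap1 (w - 1) := lap1_le _ _ (by norm_num)
  have hd1 : 0 < dens1 w := by unfold dens1; nlinarith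
  have hd0 : 0 < dens0 w := by unfold dens0; nlinarith
  have hden : (0:ℝ) < 0.01 * e + 0.99 := by nlinarith
  have hnum : (0:ℝ) < e * (0.9 * e + 0.1) := by nlinarith
  have key1 : dens1 w * (0.01 * e + 0.99) ≤ e * (0.9 * e + 0.1) * dens0 w := by
    unfold dens1 dens0
    nlinarith [mul_nonneg (mul_nonneg (by linarith : (0:ℝ) ≤ 0.9*e+0.1) (by norm_num : (0:ℝ) ≤ 0.99)) (by nlinarith : 0 ≤ e * lap1 w - lap1 (w-1)),
      mul_nonneg (mul_nonneg (by linarith : (0:ℝ) ≤ 0.01*e+0.99) (by norm_num : (0:ℝ) ≤ 0.9)) (by nlinarith : 0 ≤ e * lap1 (w-1) - lap1 (w-2))]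
  have key2 : dens0 w * (0.01 * e + 0.99) ≤ e * (0.9 * e + 0.1) * dens1 w := by
    unfold dens1 dens0
    nlinarith [mul_pos hb (mul_pos (by linarith : (0:ℝ) < e - 1) (by linarith : (0:ℝ) < e - 1)),
      mul_nonneg (mul_nonneg (by linarith : (0:ℝ) ≤ 0.01*e+0.99) (by norm_num : (0:ℝ) ≤ 0.99)) (by nlinarith : 0 ≤ e * lap1 (w-1) - lap1 w),
      mul_nonneg (mul_nonneg (by linarith : (0:ℝ) ≤ 0.9*e+0.1) (by nlinarith : (0:ℝ) ≤ 0.9 * e)) (by nlinarith : 0 ≤ e * lap1 (w-2) - lap1 (w-1))]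
  have hE : (0:ℝ) < Econ := by unfold Econ; positivity
  rw [abs_le]
  constructor
  · rw [← Real.log_inv]
    apply Real.log_le_log (by positivity)
    unfold Econ
    rw [inv_div, div_le_div_iff₀ hnum hd0]
    linarith [key2]
  · apply Real.log_le_log (by positivity)
    unfold Econ
    rw [div_le_div_iff₀ hd0 hden]
    linarith [key1]

set_option maxHeartbeats 1000000 in
/-- **Pufferfish privacy does not compose linearly**: for the two-node binary Markov
chain with `p = 0.9`, `q = 0.01`, the mechanism `M(X) = X₁ + X₂ + Lap(1)` and the
secret pair `(X₁ = 0, X₁ = 1)`, if `ε = sup_w |log (dens1 w / dens0 w)|` is the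
privacy level of a single release, then the two independent releases
`(F(X)+Z₁, F(X)+Z₂)` fail `2ε`-Pufferfish privacy: there is an output `w` where the
joint log-likelihood ratio exceeds `2ε` in absolute value. -/
theorem pufferfish_no_linear_composition :
    ∃ w : ℝ, |Real.log (dens1Two w / dens0Two w)| >
      2 * sSup { r : ℝ | ∃ w' : ℝ, r = |Real.log (dens1 w' / dens0 w')| } := by
  set e := Real.exp 1 with he
  clear_value e
  have helo : (2.7182818283:ℝ) < e := by rw [he]; exact Real.exp_one_gt_d9
  have hehi : e < 2.7182818286 := by rw [he]; exact Real.exp_one_lt_d9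
  have hden : (0:ℝ) < 0.01 * e + 0.99 := by nlinarith
  have hnum : (0:ℝ) < e * (0.9 * e + 0.1) := by nlinarith
  have hE1 : (1:ℝ) ≤ Econ := by
    unfold Econ; rw [← he, le_div_iff₀ hden]; nlinarith
  have hsup : sSup { r : ℝ | ∃ w' : ℝ, r = |Real.log (dens1 w' / dens0 w')| } ≤ Real.log Econ := by
    apply Real.sSup_le
    · rintro r ⟨w', rfl⟩; exact S_bound w'
    · exact Real.log_nonneg hE1
  have key : 2 * Real.log Econ < |Real.log (dens1Two 2 / dens0Two 2)| := by
    have l0 : lap1 (0:ℝ) = 1/2 := by unfold lap1; norm_num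
    have l1 : lap1 (1:ℝ) = 1/2 * e⁻¹ := by
      unfold lap1; rw [he, abs_one, Real.exp_neg]
    have l2 : lap1 (2:ℝ) = 1/2 * (e^2)⁻¹ := by
      unfold lap1
      rw [show |(2:ℝ)| = 2 by norm_num, he, Real.exp_neg, show (2:ℝ) = 1+1 by norm_num,
        Real.exp_add]; ring
    have hD : dens1Two 2 / dens0Two 2 = e^2 * (0.9 * e^2 + 0.1) / (0.01 * e^2 + 0.99) := by
      unfold dens1Two dens0Two
      norm_num [l0, l1, l2]
      have h1 : e ≠ 0 := by positivity
      field_simp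
      ring
    rw [hD]
    have hgoal : Econ ^ 2 < e^2 * (0.9 * e^2 + 0.1) / (0.01 * e^2 + 0.99) := by
      unfold Econ
      rw [← he, div_pow, div_lt_div_iff₀ (by positivity) (by nlinarith)]
      have p2lo : (7.38905609:ℝ) < e^2 := by nlinarith
      have p2hi : e^2 < (7.38905611:ℝ) := by nlinarith
      have p3lo : (20.0855369:ℝ) < e^3 := by nlinarith
      have p3hi : e^3 < (20.0855370:ℝ) := by nlinarith
      have p4lo : (54.5981500:ℝ) < e^4 := by nlinarith
      have p4hi : e^4 < (54.5981501:ℝ) := by nlinarith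
      have p5lo : (148.413158:ℝ) < e^5 := by nlinarith [p4lo, p4hi]
      have p5hi : e^5 < (148.413160:ℝ) := by nlinarith [p4lo, p4hi]
      have p6lo : (403.42878:ℝ) < e^6 := by nlinarith [p5lo, p5hi]
      have p6hi : e^6 < (403.42880:ℝ) := by nlinarith [p5lo, p5hi]
      ring_nf
      linarith [p2lo, p2hi, p3lo, p3hi, p4lo, p4hi, p5lo, p5hi, p6lo, p6hi]
    have hpos : (0:ℝ) < e^2 * (0.9 * e^2 + 0.1) / (0.01 * e^2 + 0.99) := by positivity
    have : 2 * Real.log Econ = Real.log (Econ ^ 2) := by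
      rw [Real.log_pow]; push_cast; ring
    rw [this]
    calc Real.log (Econ ^ 2) < Real.log (e^2 * (0.9 * e^2 + 0.1) / (0.01 * e^2 + 0.99)) :=
          Real.log_lt_log (by positivity) hgoal
      _ ≤ |Real.log (e^2 * (0.9 * e^2 + 0.1) / (0.01 * e^2 + 0.99))| := le_abs_self _
  exact ⟨2, lt_of_le_of_lt (by linarith) key⟩
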